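/- Let n > 3 and G = ZMod 2. Then ker φ_{n,G} equals the ideal sum, over all subsets A ⊆ Fin n with 2 ≤ |A| and 2 ≤ |Fin n \ A|, of the ideals ker φ_A. (Geometrically: the variety of the claw tree K_{n,1} for the binary Jukes-Cantor model is the scheme-theoretic intersection of the varieties of all its prolongations with two inner vertices, both of valency at least three.) -/

import Mathlib

/-- A socket of the claw tree `K_{n,1}`: a function `g : Fin n → G` whose values sum
to zero. -/
def Socket (n : ℕ) (G : Type) [AddCommGroup G] : Type :=
  {g : Fin n → G // ∑ i : Fin n, g i = 0}

/-- The monomial map of the claw tree `K_{n,1}`: the `ℚ`-algebra homomorphism from the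
polynomial ring with one variable `x_g` for each socket `g`, sending
`x_g ↦ ∏ i, y_(i, g i)`.  Its kernel is the toric ideal of `K_{n,1}` for `G`. -/
noncomputable def clawMap (n : ℕ) (G : Type) [AddCommGroup G] :
    MvPolynomial (Socket n G) ℚ →ₐ[ℚ] MvPolynomial (Fin n × G) ℚ :=
  MvPolynomial.aeval fun g : Socket n G => ∏ i : Fin n, MvPolynomial.X (i, g.1 i)

/-- The monomial map of the prolongation of the claw tree determined by a subset
`A ⊆ Fin n`: the `ℚ`-algebra homomorphism sending
`x_g ↦ (∏ i, y_(i, g i)) * z_(∑ i ∈ A, g i)`; here the variable `z_h` (for `h ∈ G`)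
corresponds to the new inner edge.  Its kernel is the toric ideal of the prolongation
tree `T_A`. -/
noncomputable def prolongMap (n : ℕ) (G : Type) [AddCommGroup G] (A : Finset (Fin n)) :
    MvPolynomial (Socket n G) ℚ →ₐ[ℚ] MvPolynomial ((Fin n × G) ⊕ G) ℚ :=
  MvPolynomial.aeval fun g : Socket n G =>
    (∏ i : Fin n, MvPolynomial.X (Sum.inl (i, g.1 i)))
      * MvPolynomial.X (Sum.inr (∑ i ∈ A, g.1 i))

namespace CKaux
open MvPolynomial

variable {σ τ : Type} (w : σ → (τ →₀ ℕ))

noncomputable def WMap (u : σ →₀ ℕ) : τ →₀ ℕ := u.sum fun s k => k • w s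

lemma WMap_zero : WMap w 0 = 0 := Finsupp.sum_zero_index

lemma WMap_add (u v : σ →₀ ℕ) : WMap w (u + v) = WMap w u + WMap w v :=
  Finsupp.sum_add_index' (fun s => zero_smul ℕ (w s)) (fun s k l => add_smul k l (w s))

lemma WMap_single (s : σ) (k : ℕ) : WMap w (Finsupp.single s k) = k • w s :=
  Finsupp.sum_single_index (zero_smul _ _)

lemma prod_pow_eq (u : σ →₀ ℕ) :
    (u.prod fun s k => (monomial (w s) (1:ℚ)) ^ k) = monomial (WMap w u) 1 := by
  induction u using Finsupp.induction_linear with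
  | zero => simp [WMap_zero]
  | add f g hf hg =>
      rw [Finsupp.prod_add_index' (fun a => pow_zero _) (fun a b c => pow_add _ b c), hf, hg,
        WMap_add, monomial_mul, one_mul]
  | single s k =>
      have h1 := Finsupp.prod_single_index (a := s) (b := k)
        (h := fun s' k' => (monomial (w s') (1:ℚ)) ^ k') (pow_zero _)
      rw [h1]
      show (monomial (w s) (1:ℚ)) ^ k = _
      rw [WMap_single, monomial_pow, one_pow]

lemma aeval_monomial_eq (u : σ →₀ ℕ) (c : ℚ) :
    aeval (fun s => monomial (w s) (1:ℚ)) (monomial u c) = monomial (WMap w u) c := by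
  rw [aeval_monomial, prod_pow_eq, algebraMap_eq, C_mul_monomial, mul_one]

lemma binomial_mem_ker (u v : σ →₀ ℕ) (h : WMap w u = WMap w v) :
    aeval (fun s => monomial (w s) (1:ℚ)) (monomial u (1:ℚ) - monomial v 1) = 0 := by
  rw [map_sub, aeval_monomial_eq, aeval_monomial_eq, h, sub_self]

lemma ker_subset_span (p : MvPolynomial σ ℚ)
    (hp : aeval (fun s => monomial (w s) (1:ℚ)) p = 0) :
    p ∈ Submodule.span ℚ {q : MvPolynomial σ ℚ |
      ∃ u v : σ →₀ ℕ, WMap w u = WMap w v ∧ q = monomial u 1 - monomial v 1} := by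
  classical
  generalize hc : p.support.card = cnum
  induction cnum using Nat.strong_induction_on generalizing p with
  | _ cnum ih =>
    rcases Finset.eq_empty_or_nonempty p.support with he | ⟨u₀, hu₀⟩
    · have : p = 0 := by rwa [← MvPolynomial.support_eq_empty]
      rw [this]; exact Submodule.zero_mem _
    · have hsum : ∑ u ∈ p.support.filter (fun u => WMap w u = WMap w u₀),
          coeff u p = 0 := by
        have h1 : aeval (fun s => monomial (w s) (1:ℚ)) p
            = ∑ u ∈ p.support, monomial (WMap w u) (coeff u p) := by
          conv_lhs => rw [MvPolynomial.as_sum p]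
          rw [map_sum]
          exact Finset.sum_congr rfl fun u _ => aeval_monomial_eq w u _
        have h2 := congrArg (coeff (WMap w u₀)) (h1.symm.trans hp)
        rw [coeff_sum, coeff_zero] at h2
        have h4 : ∑ u ∈ p.support, (if WMap w u = WMap w u₀ then coeff u p else 0)
            = ∑ u ∈ p.support, coeff (WMap w u₀) (monomial (WMap w u) (coeff u p)) := by
          refine Finset.sum_congr rfl fun u _ => ?_
          rw [coeff_monomial]
        rw [Finset.sum_filter, h4]
        exact h2
      have hcu₀ : coeff u₀ p ≠ 0 := (MvPolynomial.mem_support_iff).1 hu₀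
      have hex : ∃ v ∈ p.support.filter (fun u => WMap w u = WMap w u₀), v ≠ u₀ := by
        by_contra hno
        push_neg at hno
        have : p.support.filter (fun u => WMap w u = WMap w u₀) = {u₀} :=
          Finset.eq_singleton_iff_unique_mem.2 ⟨Finset.mem_filter.2 ⟨hu₀, rfl⟩, hno⟩
        rw [this, Finset.sum_singleton] at hsum
        exact hcu₀ hsum
      obtain ⟨v, hvmem, hvne⟩ := hex
      obtain ⟨hvsupp, hvW⟩ := Finset.mem_filter.1 hvmem
      set c := coeff u₀ p with hc0
      set q : MvPolynomial σ ℚ := monomial u₀ 1 - monomial v 1 with hq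
      set p' := p - C c * q with hp'
      have hqmem : q ∈ {q : MvPolynomial σ ℚ |
          ∃ u v : σ →₀ ℕ, WMap w u = WMap w v ∧ q = monomial u 1 - monomial v 1} :=
        ⟨u₀, v, hvW.symm, rfl⟩
      have haq : aeval (fun s => monomial (w s) (1:ℚ)) p' = 0 := by
        rw [hp', map_sub, map_mul, hp, hq, binomial_mem_ker w u₀ v hvW.symm, mul_zero, sub_zero]
      have hcoeff' : ∀ x, coeff x p' =
          coeff x p - c * ((if u₀ = x then 1 else 0) - (if v = x then 1 else 0)) := by
        intro x
        rw [hp', hq, coeff_sub, coeff_C_mul, coeff_sub, coeff_monomial, coeff_monomial]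
      have hsupp' : p'.support ⊆ p.support.erase u₀ := by
        intro x hx
        rw [MvPolynomial.mem_support_iff, hcoeff' x] at hx
        rw [Finset.mem_erase, MvPolynomial.mem_support_iff]
        constructor
        · rintro rfl
          rw [if_pos rfl, if_neg hvne] at hx
          apply hx
          rw [hc0]; ring
        · intro h0
          apply hx
          have hxu : ¬ (u₀ = x) := fun h => hcu₀ (by rw [hc0, h, h0])
          have hxv : ¬ (v = x) := fun h =>
            (MvPolynomial.mem_support_iff.1 hvsupp) (by rw [h, h0])
          rw [h0, if_neg hxu, if_neg hxv]
          ring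
      have hcard : p'.support.card < cnum := by
        rw [← hc]
        calc p'.support.card ≤ (p.support.erase u₀).card := Finset.card_le_card hsupp'
        _ < p.support.card := by
            rw [Finset.card_erase_of_mem hu₀]
            exact Nat.sub_lt (Finset.card_pos.2 ⟨u₀, hu₀⟩) one_pos
      have hmem' := ih _ hcard p' haq rfl
      have hpeq : p = p' + c • q := by rw [hp', ← C_mul']; ring
      rw [hpeq]
      exact Submodule.add_mem _ hmem' (Submodule.smul_mem _ c (Submodule.subset_span hqmem))

end CKaux

namespace CK
open MvPolynomial CKaux Multiset

variable {n : ℕ}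

abbrev Sock (n : ℕ) := Socket n (ZMod 2)

instance : DecidableEq (Sock n) := fun a b =>
  decidable_of_iff (a.1 = b.1) Subtype.ext_iff.symm

/-- weight function for the claw map -/
noncomputable def w1 (n : ℕ) : Sock n → ((Fin n × ZMod 2) →₀ ℕ) := fun g =>
  ∑ i : Fin n, Finsupp.single (i, g.1 i) 1

/-- weight function for the prolongation map -/
noncomputable def w2 (A : Finset (Fin n)) : Sock n → (((Fin n × ZMod 2) ⊕ ZMod 2) →₀ ℕ) :=
  fun g => (∑ i : Fin n, Finsupp.single (Sum.inl (i, g.1 i)) 1)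
    + Finsupp.single (Sum.inr (∑ i ∈ A, g.1 i)) 1

lemma prod_X_monomial' {τ ι : Type} [DecidableEq ι] (s : Finset ι) (f : ι → τ) :
    (∏ i ∈ s, (X (f i) : MvPolynomial τ ℚ))
      = monomial (∑ i ∈ s, Finsupp.single (f i) 1) 1 := by
  induction s using Finset.induction_on with
  | empty => rw [Finset.prod_empty, Finset.sum_empty, monomial_zero', C_1]
  | @insert a s ha ih =>
      rw [Finset.prod_insert ha, Finset.sum_insert ha, ih, X, monomial_mul, one_mul]

lemma prod_X_monomial {τ ι : Type} [DecidableEq ι] [Fintype ι] (f : ι → τ) :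
    (∏ i : ι, (X (f i) : MvPolynomial τ ℚ))
      = monomial (∑ i : ι, Finsupp.single (f i) 1) 1 :=
  prod_X_monomial' Finset.univ f

lemma claw_eq (n : ℕ) :
    clawMap n (ZMod 2) = aeval (fun g : Sock n => monomial (w1 n g) (1:ℚ)) := by
  unfold clawMap w1
  congr 1
  funext g
  exact prod_X_monomial _

lemma prolong_eq (n : ℕ) (A : Finset (Fin n)) :
    prolongMap n (ZMod 2) A = aeval (fun g : Sock n => monomial (w2 A g) (1:ℚ)) := by
  unfold prolongMap w2
  congr 1
  funext g
  rw [prod_X_monomial (fun i : Fin n => Sum.inl (i, g.1 i) : Fin n → (Fin n × ZMod 2) ⊕ ZMod 2)]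
  rw [X, monomial_mul, mul_one]

/-- count of rows with value `a` in column `i` -/
def ccount (i : Fin n) (a : ZMod 2) (M : Multiset (Sock n)) : ℕ :=
  Multiset.countP (fun g => g.1 i = a) M

def zcount (A : Finset (Fin n)) (a : ZMod 2) (M : Multiset (Sock n)) : ℕ :=
  Multiset.countP (fun g => (∑ i ∈ A, g.1 i) = a) M

lemma countP_toMultiset_single (p : Sock n → Prop) [DecidablePred p] (g : Sock n) (k : ℕ) :
    Multiset.countP p (Finsupp.single g k).toMultiset = k * (if p g then 1 else 0) := by
  rw [Finsupp.toMultiset_single, Multiset.countP_nsmul]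
  congr 1
  rw [show ({g} : Multiset (Sock n)) = g ::ₘ 0 from rfl, Multiset.countP_cons,
    Multiset.countP_zero, zero_add]

lemma w1_apply (g : Sock n) (i : Fin n) (a : ZMod 2) :
    w1 n g (i, a) = if g.1 i = a then 1 else 0 := by
  unfold w1
  rw [Finsupp.finset_sum_apply]
  rw [Finset.sum_eq_single i]
  · rw [Finsupp.single_apply]
    by_cases h : g.1 i = a
    · rw [if_pos (by rw [h]), if_pos h]
    · rw [if_neg (by simp [h]), if_neg h]
  · intro b _ hb
    rw [Finsupp.single_apply, if_neg (by simp [hb])]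
  · intro h; exact absurd (Finset.mem_univ i) h

lemma W1_apply (u : Sock n →₀ ℕ) (i : Fin n) (a : ZMod 2) :
    WMap (w1 n) u (i, a) = ccount i a u.toMultiset := by
  induction u using Finsupp.induction_linear with
  | zero => simp [WMap, ccount]
  | add f g hf hg =>
      rw [WMap_add, Finsupp.add_apply, hf, hg, Finsupp.toMultiset_add]
      unfold ccount
      rw [Multiset.countP_add]
  | single s k =>
      rw [WMap_single, Finsupp.smul_apply, w1_apply, ccount, countP_toMultiset_single]
      simp [smul_eq_mul]

lemma w2_apply_inl (A : Finset (Fin n)) (g : Sock n) (i : Fin n) (a : ZMod 2) :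
    w2 A g (Sum.inl (i, a)) = if g.1 i = a then 1 else 0 := by
  unfold w2
  rw [Finsupp.add_apply, Finsupp.single_apply, if_neg (by simp), add_zero,
    Finsupp.finset_sum_apply]
  rw [Finset.sum_eq_single i]
  · rw [Finsupp.single_apply]
    by_cases h : g.1 i = a
    · rw [if_pos (by rw [h]), if_pos h]
    · rw [if_neg (by simp [h]), if_neg h]
  · intro b _ hb
    rw [Finsupp.single_apply, if_neg (by simp [hb])]
  · intro h; exact absurd (Finset.mem_univ i) h

lemma w2_apply_inr (A : Finset (Fin n)) (g : Sock n) (a : ZMod 2) :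
    w2 A g (Sum.inr a) = if (∑ i ∈ A, g.1 i) = a then 1 else 0 := by
  unfold w2
  rw [Finsupp.add_apply, Finsupp.finset_sum_apply]
  rw [Finset.sum_eq_zero (fun b _ => by rw [Finsupp.single_apply, if_neg (by simp)]), zero_add,
    Finsupp.single_apply]
  by_cases h : (∑ i ∈ A, g.1 i) = a
  · rw [if_pos (by rw [h]), if_pos h]
  · rw [if_neg (by simp [h]), if_neg h]

lemma W2_apply_inl (A : Finset (Fin n)) (u : Sock n →₀ ℕ) (i : Fin n) (a : ZMod 2) :
    WMap (w2 A) u (Sum.inl (i, a)) = ccount i a u.toMultiset := by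
  induction u using Finsupp.induction_linear with
  | zero => simp [WMap, ccount]
  | add f g hf hg =>
      rw [WMap_add, Finsupp.add_apply, hf, hg, Finsupp.toMultiset_add]
      unfold ccount
      rw [Multiset.countP_add]
  | single s k =>
      rw [WMap_single, Finsupp.smul_apply, w2_apply_inl, ccount, countP_toMultiset_single]
      simp [smul_eq_mul]

lemma W2_apply_inr (A : Finset (Fin n)) (u : Sock n →₀ ℕ) (a : ZMod 2) :
    WMap (w2 A) u (Sum.inr a) = zcount A a u.toMultiset := by
  induction u using Finsupp.induction_linear with
  | zero => simp [WMap, zcount]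
  | add f g hf hg =>
      rw [WMap_add, Finsupp.add_apply, hf, hg, Finsupp.toMultiset_add]
      unfold zcount
      rw [Multiset.countP_add]
  | single s k =>
      rw [WMap_single, Finsupp.smul_apply, w2_apply_inr, zcount, countP_toMultiset_single]
      simp [smul_eq_mul]

/-- column statistics agree -/
def ColEq (M N : Multiset (Sock n)) : Prop := ∀ (i : Fin n) (a : ZMod 2),
  ccount i a M = ccount i a N

lemma count01 {α : Type} (f : α → ZMod 2) (M : Multiset α) :
    Multiset.countP (fun x => f x = 0) M + Multiset.countP (fun x => f x = 1) M
      = Multiset.card M := by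
  induction M using Multiset.induction_on with
  | empty => simp
  | cons a s ih =>
      rw [Multiset.countP_cons, Multiset.countP_cons, Multiset.card_cons]
      have h2 : (if f a = (0:ZMod 2) then 1 else 0) + (if f a = (1:ZMod 2) then 1 else 0) = 1 := by
        have hh : ∀ b : ZMod 2, ((if b = 0 then 1 else 0) + (if b = 1 then 1 else 0) = 1) := by
          decide
        exact hh (f a)
      omega

lemma ColEq.card {M N : Multiset (Sock n)} (hn : 0 < n) (h : ColEq M N) :
    Multiset.card M = Multiset.card N := by
  have i0 : Fin n := ⟨0, hn⟩
  rw [← count01 (fun g : Sock n => g.1 i0) M, ← count01 (fun g : Sock n => g.1 i0) N]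
  exact congrArg₂ (· + ·) (h i0 0) (h i0 1)

lemma W1_eq_iff (u v : Sock n →₀ ℕ) :
    WMap (w1 n) u = WMap (w1 n) v ↔ ColEq u.toMultiset v.toMultiset := by
  constructor
  · intro h i a
    rw [← W1_apply, ← W1_apply, h]
  · intro h
    ext x
    obtain ⟨i, a⟩ := x
    rw [W1_apply, W1_apply]
    exact h i a

lemma W2_eq (hn : 0 < n) (A : Finset (Fin n)) (M N : Multiset (Sock n))
    (h1 : ColEq M N) (hz : zcount A 1 M = zcount A 1 N) :
    WMap (w2 A) M.toFinsupp = WMap (w2 A) N.toFinsupp := by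
  have hcard := ColEq.card hn h1
  ext x
  match x with
  | Sum.inl (i, a) =>
      rw [W2_apply_inl, W2_apply_inl, Multiset.toFinsupp_toMultiset,
        Multiset.toFinsupp_toMultiset]
      exact h1 i a
  | Sum.inr a =>
      rw [W2_apply_inr, W2_apply_inr, Multiset.toFinsupp_toMultiset,
        Multiset.toFinsupp_toMultiset]
      have h2 : ∀ b : ZMod 2, b = 0 ∨ b = 1 := by decide
      rcases h2 a with rfl | rfl
      · have e1 := count01 (fun g : Sock n => ∑ i ∈ A, g.1 i) M
        have e2 := count01 (fun g : Sock n => ∑ i ∈ A, g.1 i) N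
        unfold zcount at hz ⊢
        omega
      · exact hz

end CK

namespace CK
open Multiset

-- little ZMod 2 facts
lemma z2 : ∀ a b c : ZMod 2, a ≠ c → b ≠ c → a = b := by decide
lemma z3 : ∀ a b : ZMod 2, a ≠ b → a + b = 1 := by decide
lemma z4 : ∀ a : ZMod 2, a + a = 0 := by decide

variable {n : ℕ}

def swapFun (g p : Fin n → ZMod 2) (i j : Fin n) : Fin n → ZMod 2 :=
  fun k => if k = i ∨ k = j then p k else g k

lemma swapFun_sum {g p : Fin n → ZMod 2} {i j : Fin n} (hij : i ≠ j)
    (hi : g i ≠ p i) (hj : g j ≠ p j) (hg : ∑ k, g k = 0) (hp : ∑ k, p k = 0) :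
    ∑ k, swapFun g p i j k = 0 := by
  have key : ∀ k, swapFun g p i j k = g k + (if k ∈ ({i, j} : Finset (Fin n)) then g k + p k else 0) := by
    intro k
    unfold swapFun
    by_cases h : k = i ∨ k = j
    · rw [if_pos h, if_pos (by simp [h]), ← add_assoc, z4, zero_add]
    · rw [if_neg h, if_neg (by simp; tauto), add_zero]
  calc ∑ k, swapFun g p i j k
      = ∑ k, (g k + (if k ∈ ({i, j} : Finset (Fin n)) then g k + p k else 0)) :=
        Finset.sum_congr rfl fun k _ => key k
    _ = (∑ k, g k) + ∑ k, (if k ∈ ({i, j} : Finset (Fin n)) then g k + p k else 0) :=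
        Finset.sum_add_distrib
    _ = 0 := by
        rw [hg, zero_add, Finset.sum_ite_mem, Finset.univ_inter, Finset.sum_pair hij,
          z3 _ _ hi, z3 _ _ hj]
        decide

def swapS (g p : Sock n) (i j : Fin n) (hij : i ≠ j)
    (hi : g.1 i ≠ p.1 i) (hj : g.1 j ≠ p.1 j) : Sock n :=
  ⟨swapFun g.1 p.1 i j, swapFun_sum hij hi hj g.2 p.2⟩

lemma swapS_apply_i {g p : Sock n} {i j : Fin n} (hij : i ≠ j) (hi : g.1 i ≠ p.1 i)
    (hj : g.1 j ≠ p.1 j) : (swapS g p i j hij hi hj).1 i = p.1 i := if_pos (Or.inl rfl)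

lemma swapS_apply_j {g p : Sock n} {i j : Fin n} (hij : i ≠ j) (hi : g.1 i ≠ p.1 i)
    (hj : g.1 j ≠ p.1 j) : (swapS g p i j hij hi hj).1 j = p.1 j := if_pos (Or.inr rfl)

lemma swapS_apply_ne {g p : Sock n} {i j : Fin n} (hij : i ≠ j) (hi : g.1 i ≠ p.1 i)
    (hj : g.1 j ≠ p.1 j) {k : Fin n} (hki : k ≠ i) (hkj : k ≠ j) :
    (swapS g p i j hij hi hj).1 k = g.1 k := if_neg (by tauto)

def Step (M N : Multiset (Sock n)) : Prop :=
  ColEq M N ∧ ∃ A : Finset (Fin n), 2 ≤ A.card ∧ 2 ≤ Aᶜ.card ∧ zcount A 1 M = zcount A 1 N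

def Reach (M N : Multiset (Sock n)) : Prop := Relation.ReflTransGen Step M N

lemma step_swap (hn : 3 < n) {g p : Sock n} (R : Multiset (Sock n)) {i j : Fin n}
    (hij : i ≠ j) (hi : g.1 i ≠ p.1 i) (hj : g.1 j ≠ p.1 j) :
    Step (g ::ₘ p ::ₘ R)
      (swapS g p i j hij hi hj ::ₘ swapS p g i j hij (Ne.symm hi) (Ne.symm hj) ::ₘ R) := by
  constructor
  · intro i₀ a
    unfold ccount
    rw [countP_cons, countP_cons, countP_cons, countP_cons]
    by_cases h₀ : i₀ = i ∨ i₀ = j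
    · have v1 : (swapS g p i j hij hi hj).1 i₀ = p.1 i₀ := if_pos h₀
      have v2 : (swapS p g i j hij (Ne.symm hi) (Ne.symm hj)).1 i₀ = g.1 i₀ := if_pos h₀
      rw [v1, v2]; omega
    · push_neg at h₀
      have v1 : (swapS g p i j hij hi hj).1 i₀ = g.1 i₀ := if_neg (by tauto)
      have v2 : (swapS p g i j hij (Ne.symm hi) (Ne.symm hj)).1 i₀ = p.1 i₀ := if_neg (by tauto)
      rw [v1, v2]
  · refine ⟨{i, j}, ?_, ?_, ?_⟩
    · exact le_of_eq (Finset.card_pair hij).symm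
    · rw [Finset.card_compl, Finset.card_pair hij, Fintype.card_fin]; omega
    · unfold zcount
      rw [countP_cons, countP_cons, countP_cons, countP_cons]
      have e1 : ∑ k ∈ ({i, j} : Finset (Fin n)), (swapS g p i j hij hi hj).1 k
          = p.1 i + p.1 j := by
        rw [Finset.sum_pair hij, swapS_apply_i, swapS_apply_j]
      have e2 : ∑ k ∈ ({i, j} : Finset (Fin n)),
          (swapS p g i j hij (Ne.symm hi) (Ne.symm hj)).1 k = g.1 i + g.1 j := by
        rw [Finset.sum_pair hij, swapS_apply_i, swapS_apply_j]
      have e3 : ∑ k ∈ ({i, j} : Finset (Fin n)), g.1 k = g.1 i + g.1 j := Finset.sum_pair hij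
      have e4 : ∑ k ∈ ({i, j} : Finset (Fin n)), p.1 k = p.1 i + p.1 j := Finset.sum_pair hij
      simp only [e1, e2, e3, e4]
      omega

lemma step_cons (a : Sock n) {M N : Multiset (Sock n)} (h : Step M N) :
    Step (a ::ₘ M) (a ::ₘ N) := by
  obtain ⟨h1, A, hA1, hA2, hA3⟩ := h
  constructor
  · intro i b
    unfold ccount
    rw [countP_cons, countP_cons]
    have := h1 i b
    unfold ccount at this
    omega
  · refine ⟨A, hA1, hA2, ?_⟩
    unfold zcount at hA3 ⊢
    rw [countP_cons, countP_cons]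
    omega

lemma reach_cons (a : Sock n) {M N : Multiset (Sock n)} (h : Reach M N) :
    Reach (a ::ₘ M) (a ::ₘ N) :=
  Relation.ReflTransGen.lift _ (fun _ _ hs => step_cons a hs) _ _ h

lemma reach_colEq {M N : Multiset (Sock n)} (h : Reach M N) : ColEq M N := by
  induction h with
  | refl => exact fun i a => rfl
  | tail _ h2 ih => exact fun i a => (ih i a).trans (h2.1 i a)

def dist (g h : Sock n) : ℕ := (Finset.univ.filter (fun k => g.1 k ≠ h.1 k)).card

lemma even_dist (g h : Sock n) : Even (dist g h) := by
  have hsum : ∑ k, (g.1 k + h.1 k) = 0 := by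
    rw [Finset.sum_add_distrib, g.2, h.2, add_zero]
  have h2 : ∑ k, (g.1 k + h.1 k)
      = ∑ k ∈ Finset.univ.filter (fun k => g.1 k ≠ h.1 k), (g.1 k + h.1 k)
        + ∑ k ∈ Finset.univ.filter (fun k => ¬ g.1 k ≠ h.1 k), (g.1 k + h.1 k) :=
    (Finset.sum_filter_add_sum_filter_not _ _ _).symm
  have h3 : ∑ k ∈ Finset.univ.filter (fun k => g.1 k ≠ h.1 k), (g.1 k + h.1 k)
      = (dist g h : ZMod 2) := by
    rw [Finset.sum_congr rfl (fun k hk => z3 _ _ (Finset.mem_filter.1 hk).2),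
      Finset.sum_const, dist]
    simp
  have h4 : ∑ k ∈ Finset.univ.filter (fun k => ¬ g.1 k ≠ h.1 k), (g.1 k + h.1 k) = 0 := by
    refine Finset.sum_eq_zero fun k hk => ?_
    have := (Finset.mem_filter.1 hk).2
    push_neg at this
    rw [this, z4]
  rw [h2, h3, h4, add_zero] at hsum
  have h5 : (2 : ℕ) ∣ dist g h := (ZMod.natCast_eq_zero_iff _ 2).1 hsum
  obtain ⟨c, hc⟩ := h5
  exact ⟨c, by omega⟩

end CK

namespace CK
open Multiset

variable {n : ℕ}

def DSet (M : Multiset (Sock n)) (h₀ : Sock n) : Set ℕ :=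
  {k | ∃ M', Reach M M' ∧ ∃ g ∈ M', dist g h₀ = k}

noncomputable def dstar (M : Multiset (Sock n)) (h₀ : Sock n) : ℕ := sInf (DSet M h₀)

lemma extract2 {α : Type} [DecidableEq α] {g p : α} {M : Multiset α}
    (hg : g ∈ M) (hp : p ∈ M.erase g) : ∃ R, M = g ::ₘ p ::ₘ R :=
  ⟨(M.erase g).erase p, by rw [cons_erase hp, cons_erase hg]⟩

lemma extract3 {α : Type} [DecidableEq α] {g p p' : α} {M : Multiset α}
    (hg : g ∈ M) (hp : p ∈ M.erase g) (hp' : p' ∈ M.erase g) (hne : p' ≠ p) :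
    ∃ R, M = g ::ₘ p ::ₘ p' ::ₘ R := by
  have hp'' : p' ∈ (M.erase g).erase p := (mem_erase_of_ne hne).2 hp'
  exact ⟨((M.erase g).erase p).erase p', by rw [cons_erase hp'', cons_erase hp, cons_erase hg]⟩

lemma extract4 {α : Type} [DecidableEq α] {g p p' p'' : α} {M : Multiset α}
    (hg : g ∈ M) (hp : p ∈ M.erase g) (hp' : p' ∈ M.erase g) (hp'' : p'' ∈ M.erase g)
    (hne1 : p' ≠ p) (hne2 : p'' ≠ p) (hne3 : p'' ≠ p') :
    ∃ R, M = g ::ₘ p ::ₘ p' ::ₘ p'' ::ₘ R := by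
  have h1 : p' ∈ (M.erase g).erase p := (mem_erase_of_ne hne1).2 hp'
  have h2 : p'' ∈ ((M.erase g).erase p).erase p' :=
    (mem_erase_of_ne hne3).2 ((mem_erase_of_ne hne2).2 hp'')
  exact ⟨(((M.erase g).erase p).erase p').erase p'',
    by rw [cons_erase h2, cons_erase h1, cons_erase hp, cons_erase hg]⟩

lemma dist_swap_decrease {g p h₀ : Sock n} {i j : Fin n} (hij : i ≠ j)
    (hi : g.1 i ≠ p.1 i) (hj : g.1 j ≠ p.1 j)
    (hwi : g.1 i ≠ h₀.1 i) (hwj : g.1 j ≠ h₀.1 j) :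
    dist (swapS g p i j hij hi hj) h₀ + 2 = dist g h₀ := by
  have hset : Finset.univ.filter (fun k => (swapS g p i j hij hi hj).1 k ≠ h₀.1 k)
      = (Finset.univ.filter (fun k => g.1 k ≠ h₀.1 k)) \ {i, j} := by
    ext k
    rw [Finset.mem_sdiff, Finset.mem_filter, Finset.mem_filter]
    constructor
    · intro ⟨_, hk⟩
      by_cases hk1 : k = i
      · subst hk1
        rw [swapS_apply_i] at hk
        exact absurd (z2 _ _ _ (Ne.symm hi) (Ne.symm hwi)) hk
      · by_cases hk2 : k = j
        · subst hk2
          rw [swapS_apply_j] at hk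
          exact absurd (z2 _ _ _ (Ne.symm hj) (Ne.symm hwj)) hk
        · rw [swapS_apply_ne hij hi hj hk1 hk2] at hk
          exact ⟨⟨Finset.mem_univ k, hk⟩, by simp [hk1, hk2]⟩
    · intro ⟨⟨_, hk⟩, hk2⟩
      simp only [Finset.mem_insert, Finset.mem_singleton] at hk2
      push_neg at hk2
      rw [swapS_apply_ne hij hi hj hk2.1 hk2.2]
      exact ⟨Finset.mem_univ k, hk⟩
  have hsub : ({i, j} : Finset (Fin n)) ⊆ Finset.univ.filter (fun k => g.1 k ≠ h₀.1 k) := by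
    intro x hx
    simp only [Finset.mem_insert, Finset.mem_singleton] at hx
    rcases hx with rfl | rfl <;> exact Finset.mem_filter.2 ⟨Finset.mem_univ _, by assumption⟩
  have := Finset.card_sdiff_add_card_eq_card hsub
  rw [Finset.card_pair hij] at this
  unfold dist
  rw [hset]
  exact this

lemma dist_swap_keep {g p h₀ : Sock n} {i k : Fin n} (hik : i ≠ k)
    (hi : g.1 i ≠ p.1 i) (hk : g.1 k ≠ p.1 k)
    (hwi : g.1 i ≠ h₀.1 i) (hwk : g.1 k = h₀.1 k) :
    dist (swapS g p i k hik hi hk) h₀ = dist g h₀ := by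
  have hset : Finset.univ.filter (fun k' => (swapS g p i k hik hi hk).1 k' ≠ h₀.1 k')
      = insert k ((Finset.univ.filter (fun k' => g.1 k' ≠ h₀.1 k')).erase i) := by
    ext k₀
    rw [Finset.mem_filter, Finset.mem_insert, Finset.mem_erase, Finset.mem_filter]
    constructor
    · intro ⟨_, hne⟩
      by_cases h1 : k₀ = i
      · subst h1
        rw [swapS_apply_i] at hne
        exact absurd (z2 _ _ _ (Ne.symm hi) (Ne.symm hwi)) hne
      · by_cases h2 : k₀ = k
        · exact Or.inl h2
        · rw [swapS_apply_ne hik hi hk h1 h2] at hne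
          exact Or.inr ⟨h1, Finset.mem_univ _, hne⟩
    · intro hmem
      rcases hmem with rfl | ⟨h1, _, h2⟩
      · rw [swapS_apply_j]
        exact ⟨Finset.mem_univ _, fun hcon => hk (hcon ▸ hwk ▸ rfl)⟩
      · by_cases h2' : k₀ = k
        · subst h2'
          exact absurd hwk (by exact fun h => h2 h)
        · rw [swapS_apply_ne hik hi hk h1 h2']
          exact ⟨Finset.mem_univ _, h2⟩
  unfold dist
  rw [hset]
  have hknot : k ∉ (Finset.univ.filter (fun k' => g.1 k' ≠ h₀.1 k')).erase i := by
    rw [Finset.mem_erase, Finset.mem_filter]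
    rintro ⟨-, -, hcon⟩
    exact hcon hwk
  rw [Finset.card_insert_of_notMem hknot]
  exact Finset.card_erase_add_one (Finset.mem_filter.2 ⟨Finset.mem_univ _, hwi⟩)

lemma NP {M : Multiset (Sock n)} {h₀ : Sock n} (hn : 3 < n)
    {M₁ : Multiset (Sock n)} {g p : Sock n} {R : Multiset (Sock n)}
    (hR : Reach M M₁) (hpr : M₁ = g ::ₘ p ::ₘ R) (hdist : dist g h₀ = dstar M h₀)
    {i j : Fin n} (hij : i ≠ j) (hi : g.1 i ≠ p.1 i) (hj : g.1 j ≠ p.1 j)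
    (hwi : g.1 i ≠ h₀.1 i) (hwj : g.1 j ≠ h₀.1 j) : False := by
  have hstep := step_swap hn R hij hi hj
  rw [← hpr] at hstep
  have hR2 := hR.tail hstep
  have hd2 := dist_swap_decrease (h₀ := h₀) hij hi hj hwi hwj
  have hmem : dist (swapS g p i j hij hi hj) h₀ ∈ DSet M h₀ :=
    ⟨_, hR2, _, mem_cons_self _ _, rfl⟩
  have hle : dstar M h₀ ≤ dist (swapS g p i j hij hi hj) h₀ := Nat.sInf_le hmem
  omega

lemma cover_exact {M : Multiset (Sock n)} {h₀ : Sock n} (hn : 3 < n)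
    {M₁ : Multiset (Sock n)} {g p : Sock n} {R : Multiset (Sock n)}
    (hR : Reach M M₁) (hpr : M₁ = g ::ₘ p ::ₘ R) (hdist : dist g h₀ = dstar M h₀)
    {i : Fin n} (hwi : g.1 i ≠ h₀.1 i) (hpi : g.1 i ≠ p.1 i) {k : Fin n} (hki : k ≠ i)
    (hwk : g.1 k ≠ h₀.1 k) : g.1 k = p.1 k := by
  by_contra hcon
  exact NP hn hR hpr hdist (Ne.symm hki) hpi hcon hwi hwk

lemma L2 {M : Multiset (Sock n)} {h₀ : Sock n} (hn : 3 < n)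
    {M₁ : Multiset (Sock n)} {g p p' : Sock n} {R : Multiset (Sock n)}
    (hR : Reach M M₁) (hpr : M₁ = g ::ₘ p ::ₘ p' ::ₘ R)
    (hdist : dist g h₀ = dstar M h₀)
    {i i' : Fin n} (hii' : i ≠ i')
    (hwi : g.1 i ≠ h₀.1 i) (hwi' : g.1 i' ≠ h₀.1 i')
    (hpi : g.1 i ≠ p.1 i) (hp'i' : g.1 i' ≠ p'.1 i')
    {k : Fin n} (hki : k ≠ i) (hki' : k ≠ i') (hk : g.1 k ≠ p.1 k) :
    g.1 k ≠ p'.1 k := by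
  by_cases hkW : g.1 k ≠ h₀.1 k
  · exact absurd (NP hn hR hpr hdist (Ne.symm hki) hpi hk hwi hkW) (fun h => h)
  · push_neg at hkW
    intro heq
    have hik : i ≠ k := Ne.symm hki
    have hstep := step_swap hn (p' ::ₘ R) hik hpi hk
    rw [← hpr] at hstep
    have hR2 := hR.tail hstep
    set sw1 := swapS g p i k hik hpi hk with hsw1
    set sw2 := swapS p g i k hik (Ne.symm hpi) (Ne.symm hk) with hsw2
    have hd1 : dist sw1 h₀ = dstar M h₀ :=
      (dist_swap_keep hik hpi hk hwi hkW).trans hdist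
    have hre : sw1 ::ₘ sw2 ::ₘ p' ::ₘ R = sw1 ::ₘ p' ::ₘ sw2 ::ₘ R := by
      rw [cons_swap sw2 p']
    have hi'i : i' ≠ i := Ne.symm hii'
    have hi'k : i' ≠ k := Ne.symm hki'
    have vi' : sw1.1 i' = g.1 i' := swapS_apply_ne hik hpi hk hi'i hi'k
    have vk : sw1.1 k = p.1 k := swapS_apply_j hik hpi hk
    refine NP hn hR2 hre hd1 (Ne.symm hki') ?_ ?_ ?_ ?_
    · rw [vi']; exact hp'i'
    · rw [vk, ← heq]; exact fun h => hk h.symm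
    · rw [vi']; exact hwi'
    · rw [vk, ← hkW]; exact fun h => hk h.symm
end CK

namespace CK
open Multiset

variable {n : ℕ}

lemma z5 : ∀ a b : ZMod 2, (¬ a = b) ↔ b = a + 1 := by decide

lemma sum_exchange (g : Sock n) (K : Finset (Fin n)) (X : Multiset (Sock n)) :
    ∑ k ∈ K, Multiset.countP (fun r : Sock n => g.1 k ≠ r.1 k) X
      = (X.map (fun r => (K.filter (fun k => g.1 k ≠ r.1 k)).card)).sum := by
  induction X using Multiset.induction_on with
  | empty => simp
  | cons a X ih =>
      rw [Multiset.map_cons, Multiset.sum_cons, ← ih]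
      calc ∑ k ∈ K, Multiset.countP (fun r : Sock n => g.1 k ≠ r.1 k) (a ::ₘ X)
          = ∑ k ∈ K, (Multiset.countP (fun r : Sock n => g.1 k ≠ r.1 k) X
              + if g.1 k ≠ a.1 k then 1 else 0) :=
            Finset.sum_congr rfl fun k _ => Multiset.countP_cons _ a X
        _ = (∑ k ∈ K, Multiset.countP (fun r : Sock n => g.1 k ≠ r.1 k) X)
              + ∑ k ∈ K, (if g.1 k ≠ a.1 k then 1 else 0) := Finset.sum_add_distrib
        _ = (K.filter (fun k => g.1 k ≠ a.1 k)).card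
              + ∑ k ∈ K, Multiset.countP (fun r : Sock n => g.1 k ≠ r.1 k) X := by
            rw [Finset.card_filter]; omega

lemma no_stuck (hn : 3 < n) {M N : Multiset (Sock n)} {h₀ : Sock n}
    (hCol : ColEq M N) (hh₀ : h₀ ∈ N) : dstar M h₀ = 0 := by
  by_contra hd0
  have hMcard : Multiset.card M = Multiset.card N := ColEq.card (by omega) hCol
  obtain ⟨g₀, hg₀⟩ : ∃ g₀, g₀ ∈ M := by
    rw [← Multiset.card_pos_iff_exists_mem, hMcard]
    exact Multiset.card_pos_iff_exists_mem.2 ⟨h₀, hh₀⟩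
  have hDne : (DSet M h₀).Nonempty := ⟨dist g₀ h₀, M, Relation.ReflTransGen.refl, g₀, hg₀, rfl⟩
  obtain ⟨M₁, hR, g, hgM₁, hdist0⟩ := Nat.sInf_mem hDne
  have hdist : dist g h₀ = dstar M h₀ := hdist0
  have hColM₁ : ColEq M₁ N := fun i a => ((reach_colEq hR) i a).symm.trans (hCol i a)
  have hd1 : 1 ≤ dstar M h₀ := Nat.pos_of_ne_zero hd0
  have hdeven : Even (dstar M h₀) := hdist ▸ even_dist g h₀
  have hd2 : 2 ≤ dstar M h₀ := by obtain ⟨c, hc⟩ := hdeven; omega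
  set Wf := Finset.univ.filter (fun k => g.1 k ≠ h₀.1 k) with hWfdef
  have hWcard : Wf.card = dstar M h₀ := hdist
  obtain ⟨i1, hi1, i2, hi2, hi12⟩ := Finset.one_lt_card.1 (show 1 < Wf.card by omega)
  have hw1 : g.1 i1 ≠ h₀.1 i1 := (Finset.mem_filter.1 hi1).2
  have hw2 : g.1 i2 ≠ h₀.1 i2 := (Finset.mem_filter.1 hi2).2
  -- existence of covers
  have hcover : ∀ i : Fin n, g.1 i ≠ h₀.1 i →
      ∃ p, p ∈ M₁.erase g ∧ g.1 i ≠ p.1 i ∧ p.1 i = h₀.1 i := by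
    intro i hwi
    have hpos : 0 < Multiset.countP (fun r : Sock n => r.1 i = h₀.1 i) M₁ := by
      have h1 : Multiset.countP (fun r : Sock n => r.1 i = h₀.1 i) M₁
          = ccount i (h₀.1 i) N := hColM₁ i (h₀.1 i)
      rw [h1]
      exact Multiset.countP_pos.2 ⟨h₀, hh₀, rfl⟩
    obtain ⟨r, hrM, hr⟩ := Multiset.countP_pos.1 hpos
    have hne : r ≠ g := fun h => hwi (by rw [← (h ▸ hr : g.1 i = h₀.1 i)])
    exact ⟨r, (Multiset.mem_erase_of_ne hne).2 hrM, fun hcon => hwi (hcon.trans hr), hr⟩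
  obtain ⟨p1, hp1mem, hp1i, hp1v⟩ := hcover i1 hw1
  obtain ⟨p2, hp2mem, hp2i, hp2v⟩ := hcover i2 hw2
  -- exactness of covers
  have hexact : ∀ p, p ∈ M₁.erase g → ∀ i, g.1 i ≠ h₀.1 i → g.1 i ≠ p.1 i →
      ∀ k, k ≠ i → g.1 k ≠ h₀.1 k → g.1 k = p.1 k := by
    intro p hpmem i hwi hpi k hki hwk
    obtain ⟨R, hpr⟩ := extract2 hgM₁ hpmem
    exact cover_exact hn hR hpr hdist hwi hpi hki hwk
  have hp1p2 : p2 ≠ p1 := by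
    intro hcon
    have h1 := hexact p1 hp1mem i1 hw1 hp1i i2 (Ne.symm hi12) hw2
    exact hp2i (hcon ▸ h1)
  -- the common difference set S0
  set S0 := (Finset.univ.filter (fun k => g.1 k ≠ p1.1 k)).erase i1 with hS0def
  have hS0mem : ∀ k, k ∈ S0 ↔ (k ≠ i1 ∧ g.1 k ≠ p1.1 k) := by
    intro k
    rw [hS0def, Finset.mem_erase, Finset.mem_filter]
    exact ⟨fun ⟨a, _, c⟩ => ⟨a, c⟩, fun ⟨a, c⟩ => ⟨a, Finset.mem_univ k, c⟩⟩
  have hS0W : ∀ k, k ∈ S0 → g.1 k = h₀.1 k := by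
    intro k hk
    obtain ⟨hk1, hk2⟩ := (hS0mem k).1 hk
    by_contra hcon
    exact hk2 (hexact p1 hp1mem i1 hw1 hp1i k hk1 hcon)
  have hi1S0 : i1 ∉ S0 := fun h => ((hS0mem i1).1 h).1 rfl
  have hi2S0 : i2 ∉ S0 := fun h => hw2 (hS0W i2 h)
  have hp1filter : Finset.univ.filter (fun k => g.1 k ≠ p1.1 k) = insert i1 S0 := by
    ext k
    rw [Finset.mem_filter, Finset.mem_insert, hS0mem k]
    constructor
    · intro ⟨_, hk⟩
      by_cases h : k = i1
      · exact Or.inl h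
      · exact Or.inr ⟨h, hk⟩
    · rintro (rfl | ⟨_, hk⟩)
      · exact ⟨Finset.mem_univ _, hp1i⟩
      · exact ⟨Finset.mem_univ _, hk⟩
  set s := S0.card with hsdef
  have hsodd : ¬ Even s := by
    have h1 := even_dist g p1
    rw [dist] at h1
    rw [hp1filter, Finset.card_insert_of_notMem hi1S0] at h1
    intro hcon
    obtain ⟨a, ha⟩ := hcon
    obtain ⟨b, hb⟩ := h1
    omega
  -- S0 characterization of every cover
  have hbase : ∀ p, p ∈ M₁.erase g → ∀ i, g.1 i ≠ h₀.1 i → g.1 i ≠ p.1 i → i ≠ i1 →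
      ∀ k, k ≠ i → (g.1 k ≠ p.1 k ↔ k ∈ S0) := by
    intro p hp i hwi hpi hii1 k hki
    by_cases hpp1 : p = p1
    · exact absurd (hexact p1 hp1mem i1 hw1 hp1i i hii1 hwi) (hpp1 ▸ hpi)
    · constructor
      · intro hk
        have hki1 : k ≠ i1 := by
          rintro rfl
          exact hk (hexact p hp i hwi hpi k (Ne.symm hii1) hw1)
        obtain ⟨R, hpr⟩ := extract3 hgM₁ hp hp1mem (fun h => hpp1 h.symm)
        exact (hS0mem k).2 ⟨hki1, L2 hn hR hpr hdist hii1 hwi hw1 hpi hp1i hki hki1 hk⟩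
      · intro hk
        obtain ⟨hki1, hkp1⟩ := (hS0mem k).1 hk
        obtain ⟨R, hpr⟩ := extract3 hgM₁ hp1mem hp hpp1
        exact L2 hn hR hpr hdist (Ne.symm hii1) hw1 hwi hp1i hpi hki1 hki hkp1
  have hSSET2 : ∀ k, k ≠ i2 → (g.1 k ≠ p2.1 k ↔ k ∈ S0) :=
    hbase p2 hp2mem i2 hw2 hp2i (Ne.symm hi12)
  have hSSET : ∀ p, p ∈ M₁.erase g → ∀ i, g.1 i ≠ h₀.1 i → g.1 i ≠ p.1 i →
      ∀ k, k ≠ i → (g.1 k ≠ p.1 k ↔ k ∈ S0) := by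
    intro p hp i hwi hpi k hki
    by_cases hii1 : i = i1
    · subst hii1
      by_cases hpp2 : p = p2
      · exact absurd (hexact p2 hp2mem i2 hw2 hp2i i hi12 hwi) (hpp2 ▸ hpi)
      · by_cases hki2 : k = i2
        · subst hki2
          constructor
          · intro hcon
            exact absurd (hexact p hp i hwi hpi k (Ne.symm hi12) hw2) hcon
          · intro hcon
            exact absurd hcon hi2S0
        · constructor
          · intro hk
            obtain ⟨R, hpr⟩ := extract3 hgM₁ hp hp2mem (fun h => hpp2 h.symm)
            exact (hSSET2 k hki2).1
              (L2 hn hR hpr hdist hi12 hwi hw2 hpi hp2i hki hki2 hk)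
          · intro hk
            obtain ⟨R, hpr⟩ := extract3 hgM₁ hp2mem hp hpp2
            exact L2 hn hR hpr hdist (Ne.symm hi12) hw2 hwi hp2i hpi hki2 hki
              ((hSSET2 k hki2).2 hk)
    · exact hbase p hp i hwi hpi hii1 k hki
  -- caseA: light rows
  have hcaseA : ∀ r, r ∈ M₁.erase g → (∀ i, i ∈ Wf → g.1 i = r.1 i) →
      ∀ j, j ∈ S0 → g.1 j = r.1 j → ∀ k, k ≠ j → (g.1 k ≠ r.1 k ↔ k ∈ S0) := by
    intro r hr hcov j hjS0 hjr k hkj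
    obtain ⟨hjne1, hjp1⟩ := (hS0mem j).1 hjS0
    have hgj : g.1 j = h₀.1 j := hS0W j hjS0
    have hi1j : i1 ≠ j := Ne.symm hjne1
    have hrp1 : r ≠ p1 := by
      intro hcon
      rw [hcon] at hjr
      exact hjp1 hjr
    have hcovi1 : g.1 i1 = r.1 i1 := hcov i1 hi1
    have hcovi2 : g.1 i2 = r.1 i2 := hcov i2 hi2
    have hrp2 : p2 ≠ r := by
      intro hcon
      rw [← hcon] at hcovi2
      exact hp2i hcovi2
    obtain ⟨R, hpr⟩ := extract4 hgM₁ hp1mem hr hp2mem hrp1 hp1p2 hrp2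
    have hstep := step_swap hn (r ::ₘ p2 ::ₘ R) hi1j hp1i hjp1
    rw [← hpr] at hstep
    have hR2 := hR.tail hstep
    set sw1 := swapS g p1 i1 j hi1j hp1i hjp1 with hsw1def
    set sw2 := swapS p1 g i1 j hi1j (Ne.symm hp1i) (Ne.symm hjp1) with hsw2def
    have hd1 : dist sw1 h₀ = dstar M h₀ := (dist_swap_keep hi1j hp1i hjp1 hw1 hgj).trans hdist
    have hswj : sw1.1 j = p1.1 j := swapS_apply_j hi1j hp1i hjp1
    have hji2 : j ≠ i2 := fun h => hi2S0 (h ▸ hjS0)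
    have hswi2 : sw1.1 i2 = g.1 i2 := swapS_apply_ne hi1j hp1i hjp1 (Ne.symm hi12) (Ne.symm hji2)
    have hwrongj : sw1.1 j ≠ h₀.1 j := by rw [hswj, ← hgj]; exact fun h => hjp1 h.symm
    have hwrongi2 : sw1.1 i2 ≠ h₀.1 i2 := by rw [hswi2]; exact hw2
    have hcovrj : sw1.1 j ≠ r.1 j := by rw [hswj, ← hjr]; exact fun h => hjp1 h.symm
    have hcovp2 : sw1.1 i2 ≠ p2.1 i2 := by rw [hswi2]; exact hp2i
    by_cases hki1 : k = i1
    · constructor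
      · intro hcon; rw [hki1] at hcon; exact absurd hcovi1 hcon
      · intro hcon; rw [hki1] at hcon; exact absurd hcon hi1S0
    · by_cases hki2 : k = i2
      · constructor
        · intro hcon; rw [hki2] at hcon; exact absurd hcovi2 hcon
        · intro hcon; rw [hki2] at hcon; exact absurd hcon hi2S0
      · have hswk : sw1.1 k = g.1 k := swapS_apply_ne hi1j hp1i hjp1 hki1 hkj
        have hre1 : sw1 ::ₘ sw2 ::ₘ r ::ₘ p2 ::ₘ R = sw1 ::ₘ r ::ₘ p2 ::ₘ sw2 ::ₘ R := by
          rw [cons_swap sw2 r, cons_swap sw2 p2]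
        have hre2 : sw1 ::ₘ sw2 ::ₘ r ::ₘ p2 ::ₘ R = sw1 ::ₘ p2 ::ₘ r ::ₘ sw2 ::ₘ R := by
          rw [cons_swap sw2 r, cons_swap sw2 p2, cons_swap r p2]
        constructor
        · intro hk
          have h1 : sw1.1 k ≠ r.1 k := by rw [hswk]; exact hk
          have h2 := L2 hn hR2 hre1 hd1 hji2 hwrongj hwrongi2 hcovrj hcovp2 hkj hki2 h1
          rw [hswk] at h2
          exact (hSSET2 k hki2).1 h2
        · intro hk
          have h3 : g.1 k ≠ p2.1 k := (hSSET2 k hki2).2 hk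
          have h4 : sw1.1 k ≠ p2.1 k := by rw [hswk]; exact h3
          have h5 := L2 hn hR2 hre2 hd1 (Ne.symm hji2) hwrongi2 hwrongj hcovp2 hcovrj hki2 hkj h4
          rw [hswk] at h5
          exact h5
  -- caseB : deep rows have a unique outside difference
  have hcaseB : ∀ r, r ∈ M₁.erase g → (∀ i, i ∈ Wf → g.1 i = r.1 i) →
      ∀ e, e ∉ Wf → e ∉ S0 → g.1 e ≠ r.1 e →
      ∀ e', e' ∉ Wf → e' ∉ S0 → g.1 e' ≠ r.1 e' → e = e' := by
    intro r hr hcov e heW heS her e' heW' heS' her'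
    by_contra hee'
    have hri1 : r.1 i1 ≠ p1.1 i1 := by rw [← hcov i1 hi1]; exact hp1i
    have hgep1 : g.1 e = p1.1 e := by
      by_contra hcon
      have hmem : e ∈ insert i1 S0 := by
        rw [← hp1filter]; exact Finset.mem_filter.2 ⟨Finset.mem_univ _, hcon⟩
      rcases Finset.mem_insert.1 hmem with rfl | hmem2
      · exact heW hi1
      · exact heS hmem2
    have hre : r.1 e ≠ p1.1 e := by rw [← hgep1]; exact fun h => her h.symm
    have hi1e : i1 ≠ e := fun h => heW (h ▸ hi1)
    have hrp1 : r ≠ p1 := fun h => hri1 (by rw [h])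
    have hp2r : p2 ≠ r := fun hcon => hp2i (hcon ▸ hcov i2 hi2)
    obtain ⟨R, hpr⟩ := extract4 hgM₁ hr hp1mem hp2mem (Ne.symm hrp1) hp2r hp1p2
    have hstepin := step_swap hn (p2 ::ₘ R) hi1e hri1 hre
    have hstep := step_cons g hstepin
    rw [← hpr] at hstep
    have hR2 := hR.tail hstep
    set swr := swapS r p1 i1 e hi1e hri1 hre with hswrdef
    set swp := swapS p1 r i1 e hi1e (Ne.symm hri1) (Ne.symm hre) with hswpdef
    have hre2 : (g ::ₘ swr ::ₘ swp ::ₘ p2 ::ₘ R) = g ::ₘ swr ::ₘ p2 ::ₘ swp ::ₘ R := by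
      rw [cons_swap swp p2]
    have hswri1 : swr.1 i1 = p1.1 i1 := swapS_apply_i hi1e hri1 hre
    have he'i1 : e' ≠ i1 := fun h => heW' (h ▸ hi1)
    have he'e : e' ≠ e := fun h => hee' h.symm
    have hswre' : swr.1 e' = r.1 e' := swapS_apply_ne hi1e hri1 hre he'i1 he'e
    have hcovswr : g.1 i1 ≠ swr.1 i1 := by rw [hswri1]; exact hp1i
    have he'i2 : e' ≠ i2 := fun h => heW' (h ▸ hi2)
    have hdiffe' : g.1 e' ≠ swr.1 e' := by rw [hswre']; exact her'
    have h5 := L2 hn hR2 hre2 hdist hi12 hw1 hw2 hcovswr hp2i he'i1 he'i2 hdiffe'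
    exact heS' ((hSSET2 e' he'i2).1 h5)
  -- disjointness and partition
  have hdisjWS : Disjoint Wf S0 := by
    rw [Finset.disjoint_left]
    intro a haW haS
    exact (Finset.mem_filter.1 haW).2 (hS0W a haS)
  have hpartgen : ∀ (r : Sock n),
      (Finset.univ.filter (fun k => g.1 k ≠ r.1 k)).card
        = (Wf.filter (fun k => g.1 k ≠ r.1 k)).card
          + (S0.filter (fun k => g.1 k ≠ r.1 k)).card
          + ((Finset.univ \ (Wf ∪ S0)).filter (fun k => g.1 k ≠ r.1 k)).card := by
    intro r
    rw [← Finset.card_union_of_disjoint (Finset.disjoint_filter_filter hdisjWS),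
      ← Finset.filter_union,
      ← Finset.card_union_of_disjoint (Finset.disjoint_filter_filter Finset.disjoint_sdiff),
      ← Finset.filter_union, Finset.union_sdiff_of_subset (Finset.subset_univ _)]
  -- row identity
  have hrow : ∀ r, r ∈ M₁.erase g →
      (S0.filter (fun k => g.1 k ≠ r.1 k)).card + 1
        = s + (Wf.filter (fun k => g.1 k ≠ r.1 k)).card
            + ((Finset.univ \ (Wf ∪ S0)).filter (fun k => g.1 k ≠ r.1 k)).card := by
    intro r hr
    by_cases hcov : ∃ i ∈ Wf, g.1 i ≠ r.1 i
    · obtain ⟨i, hiW, hir⟩ := hcov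
      have hwi : g.1 i ≠ h₀.1 i := (Finset.mem_filter.1 hiW).2
      have hW1 : Wf.filter (fun k => g.1 k ≠ r.1 k) = {i} := by
        ext k
        rw [Finset.mem_filter, Finset.mem_singleton]
        constructor
        · intro ⟨hkW, hkr⟩
          by_contra hki
          exact hkr (hexact r hr i hwi hir k hki (Finset.mem_filter.1 hkW).2)
        · rintro rfl
          exact ⟨hiW, hir⟩
      have hS1 : S0.filter (fun k => g.1 k ≠ r.1 k) = S0 := by
        apply Finset.filter_true_of_mem
        intro k hk
        have hki : k ≠ i := fun h => hwi (h ▸ hS0W k hk)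
        exact (hSSET r hr i hwi hir k hki).2 hk
      have hO1 : (Finset.univ \ (Wf ∪ S0)).filter (fun k => g.1 k ≠ r.1 k) = ∅ := by
        rw [Finset.filter_eq_empty_iff]
        intro k hk hkr
        have hkk := Finset.mem_sdiff.1 hk
        have hknW : k ∉ Wf := fun h => hkk.2 (Finset.mem_union_left _ h)
        have hknS : k ∉ S0 := fun h => hkk.2 (Finset.mem_union_right _ h)
        have hki : k ≠ i := fun h => hknW (h ▸ hiW)
        exact hknS ((hSSET r hr i hwi hir k hki).1 hkr)
      rw [hW1, hS1, hO1, Finset.card_singleton, Finset.card_empty]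
    · push_neg at hcov
      have hW0 : Wf.filter (fun k => g.1 k ≠ r.1 k) = ∅ := by
        rw [Finset.filter_eq_empty_iff]
        exact fun k hk h => h (hcov k hk)
      by_cases hlight : ∃ j ∈ S0, g.1 j = r.1 j
      · obtain ⟨j, hjS0, hjr⟩ := hlight
        have hA := hcaseA r hr hcov j hjS0 hjr
        have hS1 : S0.filter (fun k => g.1 k ≠ r.1 k) = S0.erase j := by
          ext k
          constructor
          · intro hk
            have hkS := (Finset.mem_filter.1 hk).1
            have hkr := (Finset.mem_filter.1 hk).2
            refine Finset.mem_erase.2 ⟨?_, hkS⟩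
            rintro rfl
            exact hkr hjr
          · intro hk
            obtain ⟨hkj, hkS⟩ := Finset.mem_erase.1 hk
            exact Finset.mem_filter.2 ⟨hkS, (hA k hkj).2 hkS⟩
        have hO1 : (Finset.univ \ (Wf ∪ S0)).filter (fun k => g.1 k ≠ r.1 k) = ∅ := by
          rw [Finset.filter_eq_empty_iff]
          intro k hk hkr
          have hkk := Finset.mem_sdiff.1 hk
          have hknS : k ∉ S0 := fun h => hkk.2 (Finset.mem_union_right _ h)
          have hkj : k ≠ j := fun h => hknS (h ▸ hjS0)
          exact hknS ((hA k hkj).1 hkr)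
        rw [hW0, hS1, hO1, Finset.card_empty]
        have := Finset.card_erase_add_one hjS0
        omega
      · push_neg at hlight
        have hS1 : S0.filter (fun k => g.1 k ≠ r.1 k) = S0 :=
          Finset.filter_true_of_mem hlight
        have hEsub : ∀ e ∈ (Finset.univ \ (Wf ∪ S0)).filter (fun k => g.1 k ≠ r.1 k),
            e ∉ Wf ∧ e ∉ S0 ∧ g.1 e ≠ r.1 e := by
          intro e he
          obtain ⟨hk1, hk2⟩ := Finset.mem_filter.1 he
          have hkk := Finset.mem_sdiff.1 hk1
          exact ⟨fun h => hkk.2 (Finset.mem_union_left _ h),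
            fun h => hkk.2 (Finset.mem_union_right _ h), hk2⟩
        have hEle : ((Finset.univ \ (Wf ∪ S0)).filter (fun k => g.1 k ≠ r.1 k)).card ≤ 1 := by
          by_contra hcon
          push_neg at hcon
          obtain ⟨e, he, e', he', hee'⟩ := Finset.one_lt_card.1 hcon
          obtain ⟨h1, h2, h3⟩ := hEsub e he
          obtain ⟨h4, h5, h6⟩ := hEsub e' he'
          exact hee' (hcaseB r hr hcov e h1 h2 h3 e' h4 h5 h6)
        have hEodd : ¬ Even ((Finset.univ \ (Wf ∪ S0)).filter (fun k => g.1 k ≠ r.1 k)).card := by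
          have hev := even_dist g r
          rw [dist] at hev
          have heq := hpartgen r
          rw [hW0, hS1, Finset.card_empty] at heq
          obtain ⟨b, hb⟩ := hev
          intro hcon
          obtain ⟨a, ha⟩ := hcon
          refine hsodd ⟨b - a, ?_⟩
          omega
        have hE1 : ((Finset.univ \ (Wf ∪ S0)).filter (fun k => g.1 k ≠ r.1 k)).card = 1 := by
          have h0 : ((Finset.univ \ (Wf ∪ S0)).filter (fun k => g.1 k ≠ r.1 k)).card ≠ 0 :=
            fun h => hEodd (h ▸ Even.zero)
          omega
        rw [hW0, hS1, hE1, Finset.card_empty]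
  -- ===== counting =====
  clear hcaseA hcaseB hbase hSSET hSSET2 hexact hcover
  set P := M₁.erase g with hPdef
  have hM₁P : M₁ = g ::ₘ P := (cons_erase hgM₁).symm
  set N' := N.erase h₀ with hN'def
  have hNN' : N = h₀ ::ₘ N' := (cons_erase hh₀).symm
  have hq : ∀ k : Fin n, Multiset.countP (fun r : Sock n => g.1 k ≠ r.1 k) M₁
      = Multiset.countP (fun r : Sock n => g.1 k ≠ r.1 k) N := by
    intro k
    have h1 : ∀ X : Multiset (Sock n),
        Multiset.countP (fun r : Sock n => g.1 k ≠ r.1 k) X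
          = ccount k (g.1 k + 1) X := fun X =>
      Multiset.countP_congr rfl (fun x _ => propext (z5 (g.1 k) (x.1 k)))
    rw [h1 M₁, h1 N]
    exact hColM₁ k _
  have hqM : ∀ k : Fin n, Multiset.countP (fun r : Sock n => g.1 k ≠ r.1 k) M₁
      = Multiset.countP (fun r : Sock n => g.1 k ≠ r.1 k) P := by
    intro k
    rw [hM₁P, Multiset.countP_cons, if_neg (by exact fun h => h rfl), add_zero]
  have hqN : ∀ k : Fin n, Multiset.countP (fun r : Sock n => g.1 k ≠ r.1 k) N
      = Multiset.countP (fun r : Sock n => g.1 k ≠ r.1 k) N'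
        + (if g.1 k ≠ h₀.1 k then 1 else 0) := by
    intro k; rw [hNN', Multiset.countP_cons]
  have hcardPN : Multiset.card P = Multiset.card N' := by
    have h1 : Multiset.card M₁ = Multiset.card N := ColEq.card (by omega) hColM₁
    rw [hM₁P, hNN', Multiset.card_cons, Multiset.card_cons] at h1
    omega
  -- the three region masses, for P and N'
  have hPN' : ∀ K : Finset (Fin n), (∀ k ∈ K, g.1 k = h₀.1 k) →
      ((P.map (fun r => (K.filter (fun k => g.1 k ≠ r.1 k)).card)).sum
        = (N'.map (fun r => (K.filter (fun k => g.1 k ≠ r.1 k)).card)).sum) := by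
    intro K hK
    rw [← sum_exchange, ← sum_exchange]
    refine Finset.sum_congr rfl fun k hk => ?_
    rw [← hqM, hq, hqN, if_neg (fun h => h (hK k hk)), add_zero]
  have hWmass : (P.map (fun r => (Wf.filter (fun k => g.1 k ≠ r.1 k)).card)).sum
      = (N'.map (fun r => (Wf.filter (fun k => g.1 k ≠ r.1 k)).card)).sum + dstar M h₀ := by
    rw [← sum_exchange, ← sum_exchange]
    have h1 : ∀ k ∈ Wf, Multiset.countP (fun r : Sock n => g.1 k ≠ r.1 k) P
        = Multiset.countP (fun r : Sock n => g.1 k ≠ r.1 k) N' + 1 := by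
      intro k hk
      rw [← hqM, hq, hqN, if_pos (Finset.mem_filter.1 hk).2]
    rw [Finset.sum_congr rfl h1, Finset.sum_add_distrib]
    simp [hWcard]
  have hSmass : (P.map (fun r => (S0.filter (fun k => g.1 k ≠ r.1 k)).card)).sum
      = (N'.map (fun r => (S0.filter (fun k => g.1 k ≠ r.1 k)).card)).sum :=
    hPN' S0 hS0W
  have hOmass : (P.map (fun r => ((Finset.univ \ (Wf ∪ S0)).filter
        (fun k => g.1 k ≠ r.1 k)).card)).sum
      = (N'.map (fun r => ((Finset.univ \ (Wf ∪ S0)).filter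
        (fun k => g.1 k ≠ r.1 k)).card)).sum := by
    refine hPN' _ fun k hk => ?_
    have hkk := Finset.mem_sdiff.1 hk
    have hknW : k ∉ Wf := fun h => hkk.2 (Finset.mem_union_left _ h)
    by_contra hcon
    exact hknW (Finset.mem_filter.2 ⟨Finset.mem_univ _, hcon⟩)
  -- row identity summed over P
  have hrowsum : (P.map (fun r => (S0.filter (fun k => g.1 k ≠ r.1 k)).card)).sum
        + Multiset.card P
      = s * Multiset.card P
        + (P.map (fun r => (Wf.filter (fun k => g.1 k ≠ r.1 k)).card)).sum
        + (P.map (fun r => ((Finset.univ \ (Wf ∪ S0)).filter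
            (fun k => g.1 k ≠ r.1 k)).card)).sum := by
    have h1 : (P.map (fun r => (S0.filter (fun k => g.1 k ≠ r.1 k)).card + 1)).sum
        = (P.map (fun r => s + ((Wf.filter (fun k => g.1 k ≠ r.1 k)).card
            + ((Finset.univ \ (Wf ∪ S0)).filter (fun k => g.1 k ≠ r.1 k)).card))).sum := by
      refine congrArg Multiset.sum (Multiset.map_congr rfl fun r hr => ?_)
      have := hrow r hr
      omega
    rw [Multiset.sum_map_add, Multiset.sum_map_add, Multiset.sum_map_add] at h1
    have h2 : (P.map (fun _ : Sock n => (1:ℕ))).sum = Multiset.card P := by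
      rw [show (fun _ : Sock n => (1:ℕ)) = Function.const (Sock n) 1 from rfl,
        Multiset.map_const, Multiset.sum_replicate, smul_eq_mul, mul_one]
    have h3 : (P.map (fun _ : Sock n => s)).sum = Multiset.card P * s := by
      rw [show (fun _ : Sock n => s) = Function.const (Sock n) s from rfl,
        Multiset.map_const, Multiset.sum_replicate, smul_eq_mul]
    rw [h2, h3] at h1
    have h4 : Multiset.card P * s = s * Multiset.card P := Nat.mul_comm _ _
    omega
  -- N' side inequalities
  have hF1 : (N'.map (fun r => (S0.filter (fun k => g.1 k ≠ r.1 k)).card)).sum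
        + Multiset.card N'
      ≤ s * Multiset.card N'
        + (N'.map (fun r => if (S0.filter (fun k => g.1 k ≠ r.1 k)).card = s
            then 1 else 0)).sum := by
    have h1 : ∀ r ∈ N', (S0.filter (fun k => g.1 k ≠ r.1 k)).card + 1
        ≤ s + (if (S0.filter (fun k => g.1 k ≠ r.1 k)).card = s then 1 else 0) := by
      intro r _
      have hle : (S0.filter (fun k => g.1 k ≠ r.1 k)).card ≤ s := Finset.card_filter_le _ _
      by_cases h : (S0.filter (fun k => g.1 k ≠ r.1 k)).card = s
      · rw [if_pos h]; omega
      · rw [if_neg h]; omega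
    have h2 := Multiset.sum_map_le_sum_map _ _ h1
    rw [Multiset.sum_map_add, Multiset.sum_map_add] at h2
    have h3 : (N'.map (fun _ : Sock n => (1:ℕ))).sum = Multiset.card N' := by
      rw [show (fun _ : Sock n => (1:ℕ)) = Function.const (Sock n) 1 from rfl,
        Multiset.map_const, Multiset.sum_replicate, smul_eq_mul, mul_one]
    have h4 : (N'.map (fun _ : Sock n => s)).sum = Multiset.card N' * s := by
      rw [show (fun _ : Sock n => s) = Function.const (Sock n) s from rfl,
        Multiset.map_const, Multiset.sum_replicate, smul_eq_mul]
    rw [h3, h4] at h2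
    have h5 : Multiset.card N' * s = s * Multiset.card N' := Nat.mul_comm _ _
    omega
  have hF2 : (N'.map (fun r => if (S0.filter (fun k => g.1 k ≠ r.1 k)).card = s
        then 1 else 0)).sum
      ≤ (N'.map (fun r => (Wf.filter (fun k => g.1 k ≠ r.1 k)).card)).sum
        + (N'.map (fun r => ((Finset.univ \ (Wf ∪ S0)).filter
            (fun k => g.1 k ≠ r.1 k)).card)).sum := by
    rw [← Multiset.sum_map_add]
    refine Multiset.sum_map_le_sum_map _ _ fun r _ => ?_
    by_cases h : (S0.filter (fun k => g.1 k ≠ r.1 k)).card = s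
    · rw [if_pos h]
      by_contra hcon
      push_neg at hcon
      have hW0 : (Wf.filter (fun k => g.1 k ≠ r.1 k)).card = 0 := by omega
      have hO0 : ((Finset.univ \ (Wf ∪ S0)).filter (fun k => g.1 k ≠ r.1 k)).card = 0 := by
        omega
      have hev := even_dist g r
      rw [dist, hpartgen r, hW0, hO0, h] at hev
      exact hsodd (by simpa using hev)
    · rw [if_neg h]; omega
  -- final contradiction
  have hmul : s * Multiset.card P = s * Multiset.card N' := by rw [hcardPN]
  omega

end CK

namespace CK
open Multiset MvPolynomial CKaux

variable {n : ℕ}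

lemma sock_ext {g h : Sock n} (hgh : ∀ k, g.1 k = h.1 k) : g = h :=
  Subtype.ext (funext hgh)

lemma plant (hn : 3 < n) {M N : Multiset (Sock n)} {h₀ : Sock n}
    (hCol : ColEq M N) (hh₀ : h₀ ∈ N) : ∃ M', Reach M M' ∧ h₀ ∈ M' := by
  have h0 := no_stuck hn hCol hh₀
  have hMcard : Multiset.card M = Multiset.card N := ColEq.card (by omega) hCol
  obtain ⟨g₀, hg₀⟩ : ∃ g₀, g₀ ∈ M := by
    rw [← Multiset.card_pos_iff_exists_mem, hMcard]
    exact Multiset.card_pos_iff_exists_mem.2 ⟨h₀, hh₀⟩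
  have hDne : (DSet M h₀).Nonempty := ⟨dist g₀ h₀, M, Relation.ReflTransGen.refl, g₀, hg₀, rfl⟩
  obtain ⟨M', hR, g, hg, hdist⟩ := Nat.sInf_mem hDne
  have hdist0 : dist g h₀ = 0 := by
    have : dist g h₀ = dstar M h₀ := hdist
    omega
  have hgh : g = h₀ := by
    apply sock_ext
    intro k
    by_contra hcon
    have hk : k ∈ Finset.univ.filter (fun k => g.1 k ≠ h₀.1 k) :=
      Finset.mem_filter.2 ⟨Finset.mem_univ _, hcon⟩
    unfold dist at hdist0
    rw [Finset.card_eq_zero] at hdist0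
    rw [hdist0] at hk
    exact absurd hk (Finset.notMem_empty k)
  exact ⟨M', hR, hgh ▸ hg⟩

lemma connect (hn : 3 < n) : ∀ (m : ℕ) (M N : Multiset (Sock n)), Multiset.card M = m →
    ColEq M N → Reach M N := by
  intro m
  induction m using Nat.strong_induction_on with
  | _ m ih =>
    intro M N hm hCol
    by_cases hN : N = 0
    · have hM : M = 0 := by
        rw [← Multiset.card_eq_zero]
        rw [ColEq.card (by omega) hCol, hN]
        rfl
      rw [hM, hN]
      exact Relation.ReflTransGen.refl
    · obtain ⟨h₀, hh₀⟩ := Multiset.exists_mem_of_ne_zero hN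
      obtain ⟨M', hR, hh₀M'⟩ := plant hn hCol hh₀
      have hColM' : ColEq M' N := fun i a => ((reach_colEq hR) i a).symm.trans (hCol i a)
      have hCol'' : ColEq (M'.erase h₀) (N.erase h₀) := by
        intro i a
        have h1 := hColM' i a
        rw [← cons_erase hh₀M', ← cons_erase hh₀] at h1
        unfold ccount at h1 ⊢
        rw [countP_cons, countP_cons] at h1
        omega
      have hcards : Multiset.card M' = m := by
        rw [← hm]
        exact (ColEq.card (by omega) (reach_colEq hR)).symm
      have hm' : Multiset.card (M'.erase h₀) = m - 1 := by
        rw [Multiset.card_erase_of_mem hh₀M', hcards]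
        rfl
      have hmpos : 1 ≤ m := by
        rw [← hcards]
        exact Multiset.card_pos_iff_exists_mem.2 ⟨h₀, hh₀M'⟩
      have hR2 := ih (m - 1) (by omega) (M'.erase h₀) (N.erase h₀) hm' hCol''
      have hR3 : Reach M' N := by
        have := reach_cons h₀ hR2
        rwa [cons_erase hh₀M', cons_erase hh₀] at this
      exact hR.trans hR3

lemma step_binomial (hn : 0 < n) {M N : Multiset (Sock n)} (h : Step M N) :
    ∃ A : Finset (Fin n), (2 ≤ A.card ∧ 2 ≤ Aᶜ.card) ∧
      (monomial M.toFinsupp (1:ℚ) - monomial N.toFinsupp 1)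
        ∈ RingHom.ker (prolongMap n (ZMod 2) A) := by
  obtain ⟨h1, A, hA1, hA2, hA3⟩ := h
  refine ⟨A, ⟨hA1, hA2⟩, ?_⟩
  rw [RingHom.mem_ker, prolong_eq]
  exact binomial_mem_ker (w2 A) _ _ (by
    have := W2_eq hn A M N h1 hA3
    exact this)

lemma reach_mem_sup (hn : 3 < n) {M N : Multiset (Sock n)} (h : Reach M N) :
    (monomial M.toFinsupp (1:ℚ) - monomial N.toFinsupp 1) ∈
      ⨆ (A : Finset (Fin n)) (_ : 2 ≤ A.card ∧ 2 ≤ Aᶜ.card),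
        RingHom.ker (prolongMap n (ZMod 2) A) := by
  induction h with
  | refl => rw [sub_self]; exact zero_mem _
  | @tail b c hMb hbc ih =>
      have hbin : (monomial b.toFinsupp (1:ℚ) - monomial c.toFinsupp 1) ∈
          ⨆ (A : Finset (Fin n)) (_ : 2 ≤ A.card ∧ 2 ≤ Aᶜ.card),
            RingHom.ker (prolongMap n (ZMod 2) A) := by
        obtain ⟨A, hA, hmem⟩ := step_binomial (by omega) hbc
        exact (le_iSup₂ (f := fun (A : Finset (Fin n))
          (_ : 2 ≤ A.card ∧ 2 ≤ Aᶜ.card) => RingHom.ker (prolongMap n (ZMod 2) A)) A hA) hmem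
      have heq : monomial M.toFinsupp (1:ℚ) - monomial c.toFinsupp 1
          = (monomial M.toFinsupp (1:ℚ) - monomial b.toFinsupp 1)
            + (monomial b.toFinsupp (1:ℚ) - monomial c.toFinsupp 1) := by ring
      rw [heq]
      exact add_mem ih hbin

noncomputable def eraseZ (n : ℕ) :
    MvPolynomial ((Fin n × ZMod 2) ⊕ ZMod 2) ℚ →ₐ[ℚ] MvPolynomial (Fin n × ZMod 2) ℚ :=
  aeval (Sum.elim X (fun _ => 1))

lemma eraseZ_comp (A : Finset (Fin n)) :
    (eraseZ n).comp (prolongMap n (ZMod 2) A) = clawMap n (ZMod 2) := by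
  apply MvPolynomial.algHom_ext
  intro g
  rw [AlgHom.comp_apply]
  unfold prolongMap clawMap
  rw [aeval_X, aeval_X, map_mul, map_prod]
  unfold eraseZ
  simp only [aeval_X, Sum.elim_inl, Sum.elim_inr, mul_one]

end CK


/-- For `n > 3` and `G = ZMod 2` (the binary Jukes–Cantor model), the toric ideal of
the claw tree `K_{n,1}` is the ideal sum, over all subsets `A ⊆ Fin n` with `2 ≤ |A|`
and `2 ≤ |Aᶜ|`, of the toric ideals of the prolongations `T_A`.  Geometrically, the
variety of `K_{n,1}` is the scheme-theoretic intersection of the varieties of all its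
prolongations with two inner vertices, both of valency at least three. -/
theorem claw_ker_eq_sup_prolongation_ker (n : ℕ) (hn : 3 < n) :
    RingHom.ker (clawMap n (ZMod 2)) =
      ⨆ (A : Finset (Fin n)) (_ : 2 ≤ A.card ∧ 2 ≤ Aᶜ.card),
        RingHom.ker (prolongMap n (ZMod 2) A) := by
  classical
  apply le_antisymm
  · intro p hp
    rw [RingHom.mem_ker, CK.claw_eq] at hp
    have hspan := CKaux.ker_subset_span (CK.w1 n) p hp
    have hsub : {q : MvPolynomial (CK.Sock n) ℚ |
        ∃ u v : CK.Sock n →₀ ℕ, CKaux.WMap (CK.w1 n) u = CKaux.WMap (CK.w1 n) v ∧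
          q = MvPolynomial.monomial u 1 - MvPolynomial.monomial v 1}
        ⊆ (Submodule.restrictScalars ℚ
          (⨆ (A : Finset (Fin n)) (_ : 2 ≤ A.card ∧ 2 ≤ Aᶜ.card),
            RingHom.ker (prolongMap n (ZMod 2) A)) : Set _) := by
      rintro q ⟨u, v, hW, rfl⟩
      have hCol : CK.ColEq u.toMultiset v.toMultiset := (CK.W1_eq_iff u v).1 hW
      have hReach := CK.connect hn (Multiset.card u.toMultiset) u.toMultiset v.toMultiset rfl hCol
      have hmem := CK.reach_mem_sup hn hReach
      rwa [Finsupp.toMultiset_toFinsupp, Finsupp.toMultiset_toFinsupp] at hmem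
    exact (Submodule.span_le.2 hsub) hspan
  · refine iSup_le fun A => iSup_le fun hA => ?_
    intro p hp
    rw [RingHom.mem_ker] at hp ⊢
    have h1 : clawMap n (ZMod 2) p = CK.eraseZ n (prolongMap n (ZMod 2) A p) := by
      rw [← CK.eraseZ_comp A]
      rfl
    rw [h1, hp, map_zero]
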